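/- Let p ∈ (0,1), τ > 0, and let (f̃_m)_{m∈ℤ} be complex numbers with Σ_{m∈ℤ} |f̃_m|^2 < ∞. Define f(θ) = Σ_{m∈ℤ} f̃_m ψ_m(θ) (this series converges absolutely) and, for each n ≥ 1 and k, l ∈ {0,…,N−1}, define (Ã_n)_{kl} = Σ_{m∈ℤ} f̃_m (Ã_{m,n})_{kl} (for each n only finitely many terms are nonzero). Then lim_{n→∞} max_{0 ≤ k,l ≤ N−1} |(Ã_n)_{kl} − f(θ_l) δ_{kl}| = 0; that is, the matrix elements of Ã_n converge, uniformly in k and l, to those of the diagonal matrix with entries f(θ_l). -/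

import Mathlib

/-! Statement 3: uniform convergence of matrix elements to the diagonal matrix, for ℓ² coefficients. -/

noncomputable section

namespace QECD

/-- The index set `J_n = {−N/2,…,−1,1,…,N/2}` with `N = 2^n`. -/
def Jn (n : ℕ) : Finset ℤ := (Finset.Icc (-(2 ^ (n - 1)) : ℤ) (2 ^ (n - 1))).erase 0

/-- The order-preserving enumeration `o : J_n → {0,…,N−1}`. -/
def oIdx (n : ℕ) (j : ℤ) : ℤ := if j < 0 then j + 2 ^ (n - 1) else j + 2 ^ (n - 1) - 1

/-- Scaled Fourier basis function `ψ_m(θ) = e^{−τ|m|^p/2} e^{imθ}`. -/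
def psi (p τ : ℝ) (m : ℤ) (θ : ℝ) : ℂ :=
  (Real.exp (-(τ * |(m : ℝ)| ^ p) / 2) : ℂ) * Complex.exp (Complex.I * (m : ℂ) * (θ : ℂ))

/-- Structure constants `c_{mj} = e^{−τ(|m|^p + |j|^p − |m+j|^p)/2}`. -/
def cst (p τ : ℝ) (m j : ℤ) : ℝ :=
  Real.exp (-(τ * (|(m : ℝ)| ^ p + |(j : ℝ)| ^ p - |((m + j : ℤ) : ℝ)| ^ p)) / 2)

/-- Truncated structure constants `c^{(n)}_{mj}`. -/
def cstN (p τ : ℝ) (n : ℕ) (m j : ℤ) : ℝ :=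
  if m + j ∈ Jn n then cst p τ m j else 0

/-- Matrix elements `(Ã_{m,n})_{kl}` of the QFT-rotated multiplication operator. -/
def Atilde (p τ : ℝ) (n : ℕ) (m : ℤ) (k l : ℕ) : ℂ :=
  (1 / (2 ^ n : ℂ)) * ∑ j ∈ Jn n,
    Complex.exp (2 * (Real.pi : ℂ) * Complex.I *
        ((((k : ℤ) - (l : ℤ)) * oIdx n j + (k : ℤ) * m : ℤ) : ℂ) / (2 ^ n : ℂ)) *
      (cstN p τ n m j : ℂ)

set_option maxHeartbeats 1000000
open Real Complex Filter Topology

section Aux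
variable {p τ : ℝ}

lemma mem_Jn {n : ℕ} {j : ℤ} : j ∈ Jn n ↔ j ≠ 0 ∧ -(2 ^ (n-1)) ≤ j ∧ j ≤ 2 ^ (n-1) := by
  simp [Jn, Finset.mem_erase, Finset.mem_Icc, and_assoc]

lemma pow_pred (n : ℕ) (hn : 1 ≤ n) : (2:ℤ) * 2 ^ (n-1) = 2 ^ n := by
  rw [← pow_succ']; congr 1; omega

lemma pow_pred_nat (n : ℕ) (hn : 1 ≤ n) : 2 * 2 ^ (n-1) = 2 ^ n := by
  rw [← pow_succ']; congr 1; omega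

lemma card_Jn {n : ℕ} (hn : 1 ≤ n) : (Jn n).card = 2 ^ n := by
  have h0 : (0:ℤ) ∈ Finset.Icc (-(2 ^ (n - 1)) : ℤ) (2 ^ (n - 1)) :=
    Finset.mem_Icc.mpr ⟨neg_nonpos.mpr (by positivity), by positivity⟩
  rw [Jn, Finset.card_erase_of_mem h0, Int.card_Icc]
  have h2 : (2:ℤ) ^ (n-1) + 1 - (-(2 ^ (n-1))) = ((2^n + 1 : ℕ) : ℤ) := by
    push_cast
    linarith [pow_pred n hn]
  rw [h2, Int.toNat_natCast]
  simp

/-- The enumeration sum: summing `F ∘ oIdx` over `Jn` equals summing `F` over `0,…,2^n−1`. -/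
lemma sum_oIdx {n : ℕ} (hn : 1 ≤ n) (F : ℤ → ℂ) :
    ∑ j ∈ Jn n, F (oIdx n j) = ∑ r ∈ Finset.range (2 ^ n), F (r : ℤ) := by
  obtain ⟨H, hH2, hHn⟩ : ∃ H : ℕ, 2 ^ n = 2 * H ∧ ((H:ℤ)) = 2 ^ (n-1) :=
    ⟨2 ^ (n-1), (pow_pred_nat n hn).symm, by push_cast; ring⟩
  refine Finset.sum_nbij' (i := fun j => (oIdx n j).toNat)
    (j := fun r => if (r:ℤ) < 2 ^ (n-1) then (r:ℤ) - 2 ^ (n-1) else (r:ℤ) - 2 ^ (n-1) + 1)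
    ?_ ?_ ?_ ?_ ?_
  · intro a ha
    rw [mem_Jn] at ha
    rw [Finset.mem_range]
    unfold oIdx
    rw [← hHn] at ha ⊢
    rw [hH2]
    split_ifs with h <;> omega
  · intro r hr
    rw [Finset.mem_range] at hr
    rw [mem_Jn]
    rw [← hHn]
    rw [hH2] at hr
    have hr' : ((r:ℤ)) < 2 * H := by exact_mod_cast hr
    split_ifs with h <;> constructor <;> [skip; constructor; skip; constructor] <;> omega
  · intro a ha
    rw [mem_Jn] at ha
    unfold oIdx
    rw [← hHn] at ha ⊢
    split_ifs with h1 h2 h2 <;> omega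
  · intro r hr
    rw [Finset.mem_range] at hr
    rw [hH2] at hr
    have hr' : ((r:ℤ)) < 2 * H := by exact_mod_cast hr
    unfold oIdx
    rw [← hHn]
    split_ifs with h1 h2 h2 <;> omega
  · intro a ha
    rw [mem_Jn] at ha
    rw [← hHn] at ha
    congr 1
    unfold oIdx
    rw [← hHn]
    split_ifs with h <;> rw [Int.toNat_of_nonneg (by omega)]

/-- Geometric sum of roots of unity vanishes. -/
lemma sum_range_exp_eq_zero {N : ℕ} (hN : 0 < N) {c : ℤ} (hc : c ≠ 0) (hc' : c.natAbs < N) :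
    ∑ r ∈ Finset.range N, Complex.exp (2 * (Real.pi:ℂ) * Complex.I * (c * r) / (N:ℂ)) = 0 := by
  have hNne : ((N:ℂ)) ≠ 0 := by exact_mod_cast hN.ne'
  set ω : ℂ := Complex.exp (2 * (Real.pi:ℂ) * Complex.I * c / N) with hω
  have hterm : ∀ r : ℕ, Complex.exp (2 * (Real.pi:ℂ) * Complex.I * (c * r) / (N:ℂ)) = ω ^ r := by
    intro r
    rw [hω, ← Complex.exp_nat_mul]
    congr 1
    field_simp
  have hω1 : ω ≠ 1 := by
    rw [hω, Ne, Complex.exp_eq_one_iff]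
    rintro ⟨k, hk⟩
    have h2πI : (2 * (Real.pi:ℂ) * Complex.I) ≠ 0 := by
      simp [Real.pi_ne_zero, Complex.I_ne_zero]
    rw [div_eq_iff hNne] at hk
    have hC : (c : ℂ) = k * N := by
      have h' : (2 * (Real.pi:ℂ) * Complex.I) * c = (2 * (Real.pi:ℂ) * Complex.I) * (k * N) := by
        rw [hk]; ring
      exact mul_left_cancel₀ h2πI h'
    have hcast : c = k * N := by exact_mod_cast hC
    have hdvd : (N:ℤ) ∣ c := ⟨k, by linarith [hcast]⟩
    have hle : (N:ℤ) ≤ |c| := Int.le_of_dvd (abs_pos.mpr hc) ((dvd_abs _ _).mpr hdvd)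
    rw [Int.abs_eq_natAbs] at hle
    omega
  have hωN : ω ^ N = 1 := by
    rw [hω, ← Complex.exp_nat_mul]
    have he : (N:ℂ) * (2 * (Real.pi:ℂ) * Complex.I * c / N) = c * (2 * (Real.pi:ℂ) * Complex.I) := by
      field_simp
    rw [he, Complex.exp_int_mul_two_pi_mul_I]
  calc ∑ r ∈ Finset.range N, Complex.exp (2 * (Real.pi:ℂ) * Complex.I * (c * r) / (N:ℂ))
      = ∑ r ∈ Finset.range N, ω ^ r := Finset.sum_congr rfl (fun r _ => hterm r)
  _ = (ω ^ N - 1) / (ω - 1) := geom_sum_eq hω1 N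
  _ = 0 := by rw [hωN]; simp


/-- Elementary MVT substitute: for `0 < y ≤ x` and `p ≤ 1`, `x^p − y^p ≤ y^(p−1)(x−y)`. -/
lemma rpow_sub_rpow_le {p : ℝ} (hp1 : p ≤ 1) {x y : ℝ} (hy : 0 < y) (hxy : y ≤ x) :
    x ^ p - y ^ p ≤ y ^ (p - 1) * (x - y) := by
  have hx : 0 < x := hy.trans_le hxy
  have h1 : x ^ p ≤ y ^ (p - 1) * x := by
    have hxy1 : (1:ℝ) ≤ x / y := (one_le_div hy).2 hxy
    have : (x / y) ^ p ≤ (x / y) ^ (1:ℝ) := Real.rpow_le_rpow_of_exponent_le hxy1 hp1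
    have hx' : y * (x / y) = x := by field_simp
    calc x ^ p = y ^ p * (x / y) ^ p := by
          rw [← Real.mul_rpow hy.le (by positivity), hx']
    _ ≤ y ^ p * (x / y) := by
        rw [Real.rpow_one] at this
        exact mul_le_mul_of_nonneg_left this (Real.rpow_nonneg hy.le p)
    _ = y ^ (p - 1) * x := by rw [Real.rpow_sub_one hy.ne']; field_simp
  have h2 : y ^ (p - 1) * y = y ^ p := by
    rw [← Real.rpow_add_one hy.ne']; ring_nf
  nlinarith [h1, h2]

/-- Key strict superadditivity: `a^p + b^p − (a+b)^p ≥ (1 − 2^(p−1)) (min a b)^p`. -/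
lemma key_superadd {p : ℝ} (hp0 : 0 < p) (hp1 : p < 1) {a b : ℝ} (ha : 0 ≤ a) (hb : 0 ≤ b)
    (hba : b ≤ a) : (1 - 2 ^ (p - 1)) * b ^ p ≤ a ^ p + b ^ p - (a + b) ^ p := by
  rcases eq_or_lt_of_le hb with h0 | hb'
  · rw [← h0]
    rw [Real.zero_rpow hp0.ne', add_zero]
    simp
  · have ha' : 0 < a := lt_of_lt_of_le hb' hba
    have hab : 0 < a + b := by linarith
    have e1 : (a + b) ^ p = a * (a + b) ^ (p - 1) + b * (a + b) ^ (p - 1) := by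
      rw [show p = (p-1) + 1 by ring, Real.rpow_add_one hab.ne']; ring
    have e2 : (a + b) ^ (p - 1) ≤ a ^ (p - 1) :=
      Real.rpow_le_rpow_of_nonpos ha' (by linarith) (by linarith)
    have e3 : (a + b) ^ (p - 1) ≤ (2 * b) ^ (p - 1) :=
      Real.rpow_le_rpow_of_nonpos (by linarith) (by linarith) (by linarith)
    have e4 : a * a ^ (p - 1) = a ^ p := by
      rw [show p = (p-1) + 1 by ring, Real.rpow_add_one ha'.ne']; ring
    have e5 : b * (2 * b) ^ (p - 1) = 2 ^ (p - 1) * b ^ p := by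
      rw [Real.mul_rpow (by norm_num) hb'.le, show p = (p-1) + 1 by ring,
        Real.rpow_add_one hb'.ne']; ring
    have hbp : (0:ℝ) < b ^ (p-1+1) := Real.rpow_pos_of_pos hb' _
    nlinarith [mul_le_mul_of_nonneg_left e2 ha'.le, mul_le_mul_of_nonneg_left e3 hb'.le]

lemma key_superadd_min {p : ℝ} (hp0 : 0 < p) (hp1 : p < 1) {a b : ℝ} (ha : 0 ≤ a) (hb : 0 ≤ b) :
    (1 - 2 ^ (p - 1)) * (min a b) ^ p ≤ a ^ p + b ^ p - (a + b) ^ p := by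
  rcases le_total b a with h | h
  · rw [min_eq_right h]; exact key_superadd hp0 hp1 ha hb h
  · rw [min_eq_left h, add_comm (a^p), add_comm a b]; exact key_superadd hp0 hp1 hb ha h



lemma summable_exp_neg_abs_rpow {p c : ℝ} (hp0 : 0 < p) (hc : 0 < c) :
    Summable (fun m : ℤ => Real.exp (-(c * |(m:ℝ)| ^ p))) := by
  obtain ⟨K, hK⟩ : ∃ K : ℕ, 2 ≤ (K:ℝ) * p := by
    obtain ⟨K, hK⟩ := exists_nat_gt (2 / p)
    exact ⟨K, (div_le_iff₀ hp0).1 hK.le⟩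
  have hnat : ∀ x : ℝ, 1 ≤ x → Real.exp (-(c * x ^ p)) ≤ (K.factorial / c ^ K) * (1 / x ^ 2) := by
    intro x hx
    have hxp : (0:ℝ) < x ^ p := Real.rpow_pos_of_pos (by linarith) p
    have h1 : (c * x ^ p) ^ K / (K.factorial) ≤ Real.exp (c * x ^ p) := by
      calc (c * x ^ p) ^ K / (K.factorial)
          ≤ ∑ i ∈ Finset.range (K+1), (c * x ^ p) ^ i / i.factorial :=
            Finset.single_le_sum (f := fun i => (c * x ^ p) ^ i / (i.factorial : ℝ))
              (fun i _ => by positivity) (Finset.self_mem_range_succ K)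
      _ ≤ Real.exp (c * x ^ p) := Real.sum_le_exp_of_nonneg (by positivity) _
    have h2 : x ^ (2:ℝ) ≤ (x ^ p) ^ K := by
      rw [← Real.rpow_natCast (x ^ p) K, ← Real.rpow_mul (by linarith)]
      exact Real.rpow_le_rpow_of_exponent_le hx (by rw [mul_comm]; exact hK)
    have h2' : x ^ (2:ℕ) ≤ (x ^ p) ^ K := by
      rw [← Real.rpow_natCast x 2]; exact_mod_cast h2
    have h3 : c ^ K * x ^ 2 / K.factorial ≤ Real.exp (c * x ^ p) := by
      refine le_trans ?_ h1
      rw [mul_pow]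
      have : c ^ K * x ^ 2 ≤ c ^ K * (x ^ p) ^ K :=
        mul_le_mul_of_nonneg_left h2' (by positivity)
      exact div_le_div_of_nonneg_right this (by positivity) |>.trans_eq rfl
    have hpos : (0:ℝ) < c ^ K * x ^ 2 / K.factorial := by positivity
    rw [Real.exp_neg]
    calc (Real.exp (c * x ^ p))⁻¹ ≤ (c ^ K * x ^ 2 / K.factorial)⁻¹ :=
          inv_anti₀ hpos h3
    _ = K.factorial / c ^ K * (1 / x ^ 2) := by field_simp
  have hbase : Summable (fun n : ℕ => 1 / ((n:ℝ) + 1) ^ 2) := by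
    have h := (summable_one_div_nat_pow (p := 2)).mpr one_lt_two
    have := (summable_nat_add_iff (f := fun n : ℕ => 1 / (n:ℝ) ^ 2) 1).mpr h
    exact this.congr (fun n => by push_cast; ring_nf)
  have hN : Summable (fun n : ℕ => Real.exp (-(c * (n:ℝ) ^ p))) := by
    rw [← summable_nat_add_iff 1]
    refine Summable.of_nonneg_of_le (fun n => (Real.exp_pos _).le) (fun n => ?_)
      (hbase.mul_left ((K.factorial : ℝ) / c ^ K))
    have h := hnat ((n:ℝ) + 1) (by linarith [Nat.cast_nonneg (α := ℝ) n])
    convert h using 3 <;> push_cast <;> ring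
  refine Summable.of_nat_of_neg (hN.congr fun n => ?_) (hN.congr fun n => ?_) <;>
    · congr 2
      push_cast
      simp [abs_of_nonneg, Nat.cast_nonneg]


def gf (p τ : ℝ) (m : ℤ) : ℝ := Real.exp (-(τ * |(m : ℝ)| ^ p) / 2)

lemma abs_exp_unit (n : ℕ) (x : ℤ) :
    ‖Complex.exp (2 * (Real.pi:ℂ) * Complex.I * (x:ℂ) / (2 ^ n : ℂ))‖ = 1 := by
  have h : 2 * (Real.pi:ℂ) * Complex.I * (x:ℂ) / (2 ^ n : ℂ)
      = ((2 * Real.pi * (x:ℝ) / 2 ^ n : ℝ) : ℂ) * Complex.I := by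
    push_cast
    ring
  rw [h, Complex.norm_exp_ofReal_mul_I]

lemma sumA {n k l : ℕ} (hn : 1 ≤ n) (hk : k < 2 ^ n) (hl : l < 2 ^ n) :
    ∑ j ∈ Jn n, Complex.exp (2 * (Real.pi:ℂ) * Complex.I *
        (((((k:ℤ) - l) * oIdx n j : ℤ)) : ℂ) / (2 ^ n : ℂ))
      = if k = l then (2 ^ n : ℂ) else 0 := by
  have h := sum_oIdx hn (F := fun t =>
    Complex.exp (2 * (Real.pi:ℂ) * Complex.I * ((((k:ℤ) - l : ℤ) : ℂ) * (t : ℂ)) / (2 ^ n : ℂ)))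
  simp only [Int.cast_mul] at h ⊢
  rw [h]
  by_cases hkl : k = l
  · subst hkl
    simp
  · rw [if_neg hkl]
    have hc : ((k:ℤ) - l) ≠ 0 := by
      intro h0
      apply hkl
      omega
    have hc' : ((k:ℤ) - l).natAbs < 2 ^ n := by omega
    have := sum_range_exp_eq_zero (N := 2 ^ n) (by positivity) hc hc'
    rw [← this]
    apply Finset.sum_congr rfl
    intro r _
    congr 1
    push_cast
    ring

lemma diff_eq {p τ : ℝ} {n k l : ℕ} (hn : 1 ≤ n) (hk : k < 2 ^ n) (hl : l < 2 ^ n) (m : ℤ) :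
    Atilde p τ n m k l - psi p τ m (2 * Real.pi * l / 2 ^ n) * (if k = l then 1 else 0)
      = (1 / (2 ^ n : ℂ)) *
          Complex.exp (2 * (Real.pi:ℂ) * Complex.I * (((k : ℤ) * m : ℤ) : ℂ) / (2 ^ n : ℂ)) *
        ∑ j ∈ Jn n,
          Complex.exp (2 * (Real.pi:ℂ) * Complex.I * ((((k:ℤ) - l) * oIdx n j : ℤ) : ℂ)
              / (2 ^ n : ℂ)) *
            ((cstN p τ n m j - gf p τ m : ℝ) : ℂ) := by
  set N : ℂ := (2 ^ n : ℂ) with hN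
  have hNne : N ≠ 0 := by rw [hN]; exact pow_ne_zero n two_ne_zero
  set E0 := Complex.exp (2 * (Real.pi:ℂ) * Complex.I * (((k : ℤ) * m : ℤ) : ℂ) / N) with hE0
  set Ej := fun j => Complex.exp (2 * (Real.pi:ℂ) * Complex.I *
      ((((k:ℤ) - l) * oIdx n j : ℤ) : ℂ) / N) with hEj
  have hA : Atilde p τ n m k l = (1 / N) * E0 * ∑ j ∈ Jn n, Ej j * ((cstN p τ n m j : ℝ) : ℂ) := by
    rw [Atilde, Finset.mul_sum, Finset.mul_sum]
    apply Finset.sum_congr rfl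
    intro j _
    have hsplit : Complex.exp (2 * (Real.pi : ℂ) * Complex.I *
        ((((k : ℤ) - (l : ℤ)) * oIdx n j + (k : ℤ) * m : ℤ) : ℂ) / (2 ^ n : ℂ))
        = E0 * Ej j := by
      rw [hE0, hEj, ← Complex.exp_add]
      congr 1
      push_cast
      ring
    rw [hsplit, hN]
    ring
  have hpsi : (1 / N) * E0 * ∑ j ∈ Jn n, Ej j * ((gf p τ m : ℝ) : ℂ)
      = psi p τ m (2 * Real.pi * l / 2 ^ n) * (if k = l then 1 else 0) := by
    rw [← Finset.sum_mul, sumA hn hk hl]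
    by_cases hkl : k = l
    · subst hkl
      rw [if_pos rfl, if_pos rfl, mul_one]
      rw [psi, gf]
      have hE0' : E0 = Complex.exp (Complex.I * (m : ℂ) * ((2 * Real.pi * k / 2 ^ n : ℝ) : ℂ)) := by
        rw [hE0]
        congr 1
        push_cast
        field_simp
        ring
      rw [hE0']
      field_simp
      ring
    · rw [if_neg hkl, if_neg hkl]
      simp
  rw [hA, ← hpsi]
  rw [← mul_sub, ← Finset.sum_sub_distrib]
  congr 1
  apply Finset.sum_congr rfl
  intro j _
  rw [← mul_sub]
  congr 1
  push_cast
  ring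

lemma diff_abs_le {p τ : ℝ} {n k l : ℕ} (hn : 1 ≤ n) (hk : k < 2 ^ n) (hl : l < 2 ^ n) (m : ℤ) :
    ‖Atilde p τ n m k l
        - psi p τ m (2 * Real.pi * l / 2 ^ n) * (if k = l then 1 else 0)‖
      ≤ (1 / (2 ^ n : ℝ)) * ∑ j ∈ Jn n, |cstN p τ n m j - gf p τ m| := by
  rw [diff_eq hn hk hl m]
  rw [norm_mul, norm_mul]
  have h1 : ‖(1 / (2 ^ n : ℂ))‖ = 1 / (2 ^ n : ℝ) := by
    simp
  rw [h1, abs_exp_unit n ((k : ℤ) * m), mul_one]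
  apply mul_le_mul_of_nonneg_left _ (by positivity)
  refine le_trans (norm_sum_le _ _) ?_
  apply Finset.sum_le_sum
  intro j _
  rw [norm_mul]
  rw [abs_exp_unit n (((k:ℤ) - l) * oIdx n j), one_mul, Complex.norm_real, Real.norm_eq_abs]


/-- Decay factor. -/
def qq (p τ : ℝ) (m : ℤ) : ℝ := Real.exp (-(τ * (1 - 2 ^ (p-1)) / 2 * |(m:ℝ)| ^ p))

/-- Normalizing constant. -/
def CC (p τ : ℝ) : ℝ := ∑' s : ℤ, qq p τ s

/-- Uniform dominating function. -/
def hmaj (p τ : ℝ) (m : ℤ) : ℝ := gf p τ m + qq p τ m + CC p τ / max |(m:ℝ)| 1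

variable {p τ : ℝ}

lemma kappa_pos (hp : p ∈ Set.Ioo (0:ℝ) 1) : 0 < 1 - (2:ℝ) ^ (p-1) := by
  have h : (2:ℝ) ^ (p-1) < (2:ℝ) ^ (0:ℝ) :=
    Real.rpow_lt_rpow_of_exponent_lt one_lt_two (by linarith [hp.2])
  rw [Real.rpow_zero] at h
  linarith

lemma qq_summable (hp : p ∈ Set.Ioo (0:ℝ) 1) (hτ : 0 < τ) : Summable (qq p τ) :=
  summable_exp_neg_abs_rpow hp.1 (div_pos (mul_pos hτ (kappa_pos hp)) two_pos)

lemma CC_nonneg (hp : p ∈ Set.Ioo (0:ℝ) 1) (hτ : 0 < τ) : 0 ≤ CC p τ :=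
  tsum_nonneg (fun s => (Real.exp_pos _).le)

lemma cst_le_qq_add (hp : p ∈ Set.Ioo (0:ℝ) 1) (hτ : 0 < τ) (m j : ℤ) :
    cst p τ m j ≤ qq p τ m + qq p τ j := by
  have habs : |((m + j : ℤ) : ℝ)| ≤ |(m:ℝ)| + |(j:ℝ)| := by push_cast; exact abs_add_le _ _
  have h1 : |((m + j : ℤ) : ℝ)| ^ p ≤ (|(m:ℝ)| + |(j:ℝ)|) ^ p :=
    Real.rpow_le_rpow (abs_nonneg _) habs hp.1.le
  have h2 := key_superadd_min hp.1 hp.2 (abs_nonneg (m:ℝ)) (abs_nonneg (j:ℝ))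
  have hE : (1 - 2 ^ (p-1)) * (min |(m:ℝ)| |(j:ℝ)|) ^ p ≤
      |(m:ℝ)| ^ p + |(j:ℝ)| ^ p - |((m + j : ℤ) : ℝ)| ^ p := by linarith
  have hcst : cst p τ m j ≤ Real.exp (-(τ * (1 - 2 ^ (p-1)) / 2 * (min |(m:ℝ)| |(j:ℝ)|) ^ p)) := by
    rw [cst]
    apply Real.exp_le_exp.mpr
    nlinarith [hE, hτ]
  rcases le_total |(m:ℝ)| |(j:ℝ)| with h | h
  · rw [min_eq_left h] at hcst
    refine hcst.trans ?_
    rw [qq, qq]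
    exact le_add_of_nonneg_right (Real.exp_pos _).le
  · rw [min_eq_right h] at hcst
    refine hcst.trans ?_
    rw [qq, qq]
    exact le_add_of_nonneg_left (Real.exp_pos _).le

lemma cstN_eq_zero_of_large {n : ℕ} (hn : 1 ≤ n) {m : ℤ} (hm : (2^n : ℤ) < |m|) (j : ℤ)
    (hj : j ∈ Jn n) : cstN p τ n m j = 0 := by
  rw [cstN, if_neg]
  intro hmem
  rw [mem_Jn] at hmem hj
  have h1 := pow_pred n hn
  have h2 := lt_abs.mp hm
  omega

lemma bnd_le_hmaj (hp : p ∈ Set.Ioo (0:ℝ) 1) (hτ : 0 < τ) {n : ℕ} (hn : 1 ≤ n) (m : ℤ) :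
    (1 / (2^n : ℝ)) * ∑ j ∈ Jn n, |cstN p τ n m j - gf p τ m| ≤ hmaj p τ m := by
  have hNpos : (0:ℝ) < (2^n : ℝ) := by positivity
  have hgf : 0 < gf p τ m := Real.exp_pos _
  have hqq : 0 < qq p τ m := Real.exp_pos _
  have hCC := CC_nonneg hp hτ
  by_cases hm : (2^n : ℤ) < |m|
  · -- all cstN vanish
    have : ∑ j ∈ Jn n, |cstN p τ n m j - gf p τ m| = (2^n : ℝ) * gf p τ m := by
      rw [Finset.sum_congr rfl (fun j hj => by
        rw [cstN_eq_zero_of_large hn hm j hj, zero_sub, abs_neg, abs_of_pos hgf]),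
        Finset.sum_const, card_Jn hn]
      simp [mul_comm]
    rw [this]
    rw [one_div, inv_mul_cancel_left₀ hNpos.ne', hmaj]
    have h0 : 0 ≤ CC p τ / max |(m:ℝ)| 1 :=
      div_nonneg hCC (le_trans zero_le_one (le_max_right _ _))
    linarith
  · push_neg at hm
    have hstep1 : ∀ j ∈ Jn n, |cstN p τ n m j - gf p τ m| ≤
        (qq p τ m + qq p τ j) + gf p τ m := by
      intro j hj
      refine (abs_sub _ _).trans ?_
      have h1 : |cstN p τ n m j| ≤ qq p τ m + qq p τ j := by
        rw [cstN]
        split_ifs with h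
        · have hcpos : 0 < cst p τ m j := Real.exp_pos _
          rw [abs_of_pos hcpos]
          exact cst_le_qq_add hp hτ m j
        · rw [abs_zero, qq, qq]
          positivity
      have h2 : |gf p τ m| = gf p τ m := abs_of_pos hgf
      linarith
    have hstep2 : ∑ j ∈ Jn n, |cstN p τ n m j - gf p τ m| ≤
        (2^n : ℝ) * (qq p τ m + gf p τ m) + CC p τ := by
      calc ∑ j ∈ Jn n, |cstN p τ n m j - gf p τ m|
          ≤ ∑ j ∈ Jn n, ((qq p τ m + gf p τ m) + qq p τ j) := by
            apply Finset.sum_le_sum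
            intro j hj
            have := hstep1 j hj
            linarith
        _ = (2^n : ℝ) * (qq p τ m + gf p τ m) + ∑ j ∈ Jn n, qq p τ j := by
            rw [Finset.sum_add_distrib, Finset.sum_const, card_Jn hn]
            push_cast
            ring
        _ ≤ (2^n : ℝ) * (qq p τ m + gf p τ m) + CC p τ := by
            have hle := Summable.sum_le_tsum (f := qq p τ) (Jn n) (fun s _ => (Real.exp_pos _).le)
              (qq_summable hp hτ)
            rw [CC]
            linarith
    have hfin : (1 / (2^n : ℝ)) * ((2^n : ℝ) * (qq p τ m + gf p τ m) + CC p τ)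
        ≤ hmaj p τ m := by
      rw [mul_add, one_div, inv_mul_cancel_left₀ hNpos.ne', inv_mul_eq_div, hmaj]
      have hmax : max |(m:ℝ)| 1 ≤ (2^n : ℝ) := by
        rw [max_le_iff]
        constructor
        · have : (|m| : ℤ) ≤ (2^n : ℤ) := hm
          calc |(m:ℝ)| = ((|m| : ℤ) : ℝ) := by push_cast; simp
          _ ≤ ((2^n : ℤ) : ℝ) := by exact_mod_cast this
          _ = (2^n : ℝ) := by push_cast; ring
        · exact one_le_pow₀ one_le_two
      have hmaxpos : (0:ℝ) < max |(m:ℝ)| 1 := lt_of_lt_of_le one_pos (le_max_right _ _)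
      have hdiv : CC p τ / (2^n : ℝ) ≤ CC p τ / max |(m:ℝ)| 1 :=
        div_le_div_of_nonneg_left hCC hmaxpos hmax
      linarith
    calc (1 / (2^n : ℝ)) * ∑ j ∈ Jn n, |cstN p τ n m j - gf p τ m|
        ≤ (1 / (2^n : ℝ)) * ((2^n : ℝ) * (qq p τ m + gf p τ m) + CC p τ) := by
          apply mul_le_mul_of_nonneg_left hstep2 (by positivity)
      _ ≤ hmaj p τ m := hfin


/-- `exp` Lipschitz-type bound: `|e^x − 1| ≤ e^{|x|} − 1`. -/
lemma abs_exp_sub_one_le' (x : ℝ) : |Real.exp x - 1| ≤ Real.exp |x| - 1 := by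
  rcases le_or_gt 0 x with h | h
  · rw [_root_.abs_of_nonneg h, _root_.abs_of_nonneg (by linarith [Real.one_le_exp h])]
  · rw [abs_of_neg h, _root_.abs_of_nonpos (by linarith [Real.exp_lt_one_iff.mpr h] : Real.exp x - 1 ≤ 0)]
    have h1 := Real.add_one_le_exp x
    have h2 := Real.add_one_le_exp (-x)
    linarith

lemma exp_sub_one_le_mul {t : ℝ} (ht : 0 ≤ t) : Real.exp t - 1 ≤ t * Real.exp t := by
  have h1 := Real.add_one_le_exp (-t)
  rw [Real.exp_neg] at h1
  have h2 := Real.exp_pos t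
  have h3 : (1 - t) * Real.exp t ≤ 1 := by
    have h4 := mul_le_mul_of_nonneg_right h1 h2.le
    rw [inv_mul_cancel₀ h2.ne'] at h4
    nlinarith
  nlinarith

/-- cst factors through gf. -/
lemma cst_eq_gf_mul (m j : ℤ) : cst p τ m j =
    gf p τ m * Real.exp (τ * (|((m + j : ℤ) : ℝ)| ^ p - |(j : ℝ)| ^ p) / 2) := by
  rw [cst, gf, ← Real.exp_add]
  congr 1
  ring

lemma cst_nonneg (m j : ℤ) : 0 ≤ cst p τ m j := (Real.exp_pos _).le
lemma gf_le_one (hp : p ∈ Set.Ioo (0:ℝ) 1) (hτ : 0 < τ) (m : ℤ) : gf p τ m ≤ 1 := by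
  rw [gf]
  apply Real.exp_le_one_iff.mpr
  have : (0:ℝ) ≤ |(m:ℝ)| ^ p := Real.rpow_nonneg (abs_nonneg _) p
  nlinarith

lemma cst_le_one (hp : p ∈ Set.Ioo (0:ℝ) 1) (hτ : 0 < τ) (m j : ℤ) : cst p τ m j ≤ 1 := by
  have habs : |((m + j : ℤ) : ℝ)| ≤ |(m:ℝ)| + |(j:ℝ)| := by push_cast; exact abs_add_le _ _
  have h1 : |((m + j : ℤ) : ℝ)| ^ p ≤ (|(m:ℝ)| + |(j:ℝ)|) ^ p :=
    Real.rpow_le_rpow (abs_nonneg _) habs hp.1.le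
  have h2 := key_superadd_min hp.1 hp.2 (abs_nonneg (m:ℝ)) (abs_nonneg (j:ℝ))
  have hκ : 0 < 1 - (2:ℝ) ^ (p-1) := by
    have h : (2:ℝ) ^ (p-1) < (2:ℝ) ^ (0:ℝ) :=
      Real.rpow_lt_rpow_of_exponent_lt one_lt_two (by linarith [hp.2])
    rw [Real.rpow_zero] at h; linarith
  have hmin : (0:ℝ) ≤ (min |(m:ℝ)| |(j:ℝ)|) ^ p :=
    Real.rpow_nonneg (le_min (abs_nonneg _) (abs_nonneg _)) p
  rw [cst]
  apply Real.exp_le_one_iff.mpr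
  nlinarith [mul_nonneg hκ.le hmin, mul_nonneg hτ.le (by nlinarith [mul_nonneg hκ.le hmin] :
    (0:ℝ) ≤ |(m:ℝ)| ^ p + |(j:ℝ)| ^ p - |((m + j : ℤ) : ℝ)| ^ p)]

/-- Pointwise limit of the average deviation. -/
lemma bnd_tendsto (hp : p ∈ Set.Ioo (0:ℝ) 1) (hτ : 0 < τ) (m : ℤ) :
    Tendsto (fun n : ℕ => (1 / (2^n : ℝ)) * ∑ j ∈ Jn n, |cstN p τ n m j - gf p τ m|)
      atTop (𝓝 0) := by
  rw [Metric.tendsto_atTop]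
  intro ε hε
  -- choose T
  have hT0 : Tendsto (fun t : ℝ => ((τ/2) * |(m:ℝ)| * Real.exp 1 + 1) * (t/2) ^ (p-1))
      atTop (𝓝 0) := by
    have h1 : Tendsto (fun t : ℝ => (t/2) ^ (p-1)) atTop (𝓝 0) :=
      (show Tendsto (fun x : ℝ => x ^ (p-1)) atTop (𝓝 0) by
        have := tendsto_rpow_neg_atTop (y := 1 - p) (by linarith [hp.2])
        simpa [neg_sub] using this).comp
        (Tendsto.atTop_div_const two_pos tendsto_id)
    simpa using h1.const_mul ((τ/2) * |(m:ℝ)| * Real.exp 1 + 1)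
  have hT1 : ∀ᶠ t : ℝ in atTop,
      ((τ/2) * |(m:ℝ)| * Real.exp 1 + 1) * (t/2) ^ (p-1) < min (ε/2) 1 :=
    hT0.eventually_lt_const (lt_min (by linarith) one_pos)
  rw [eventually_atTop] at hT1
  obtain ⟨T₀, hT₀⟩ := hT1
  obtain ⟨T, hT⟩ := exists_nat_ge (max T₀ (2 * |(m:ℝ)| + 1))
  have hTb : ((τ/2) * |(m:ℝ)| * Real.exp 1 + 1) * ((T:ℝ)/2) ^ (p-1) < min (ε/2) 1 :=
    hT₀ T (le_trans (le_max_left _ _) hT)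
  have hTm : 2 * |(m:ℝ)| + 1 ≤ (T:ℝ) := le_trans (le_max_right _ _) hT
  -- set u
  set u : ℝ := (τ/2) * |(m:ℝ)| * ((T:ℝ)/2) ^ (p-1) with hu
  have hTpos : (0:ℝ) < (T:ℝ)/2 := by
    have : (0:ℝ) ≤ |(m:ℝ)| := abs_nonneg _
    linarith
  have hrp : (0:ℝ) < ((T:ℝ)/2) ^ (p-1) := Real.rpow_pos_of_pos hTpos _
  have hu0 : 0 ≤ u := by positivity
  have hu1 : u ≤ 1 := by
    have h := hTb
    have h2 : u + ((T:ℝ)/2) ^ (p-1) ≤ ((τ/2) * |(m:ℝ)| * Real.exp 1 + 1) * ((T:ℝ)/2) ^ (p-1) := by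
      rw [hu]
      have hexp1 : (1:ℝ) ≤ Real.exp 1 := by linarith [Real.add_one_le_exp 1]
      nlinarith [abs_nonneg (m:ℝ), hrp]
    have := lt_min_iff.mp h
    linarith [hrp]
  set β : ℝ := Real.exp 1 * u with hβ
  have hβε : β < ε/2 := by
    have h2 : β + ((T:ℝ)/2) ^ (p-1) ≤ ((τ/2) * |(m:ℝ)| * Real.exp 1 + 1) * ((T:ℝ)/2) ^ (p-1) := by
      rw [hβ, hu]
      nlinarith [abs_nonneg (m:ℝ), hrp, Real.add_one_le_exp 1]
    have := lt_min_iff.mp hTb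
    linarith [hrp]
  have hβ0 : 0 ≤ β := by positivity
  -- choose n₀
  have hn0 : Tendsto (fun n : ℕ => ((2 * |(m:ℝ)| + 1 + 2 * T)) / (2^n : ℝ)) atTop (𝓝 0) := by
    apply Tendsto.div_atTop tendsto_const_nhds
    exact tendsto_pow_atTop_atTop_of_one_lt one_lt_two
  have hn1 : ∀ᶠ n : ℕ in atTop, ((2 * |(m:ℝ)| + 1 + 2 * T)) / (2^n : ℝ) < ε/2 :=
    hn0.eventually_lt_const (by linarith)
  rw [eventually_atTop] at hn1
  obtain ⟨n₁, hn₁⟩ := hn1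
  refine ⟨max n₁ 1, fun n hn => ?_⟩
  have hnn₁ : n₁ ≤ n := le_trans (le_max_left _ _) hn
  have hn671 : 1 ≤ n := le_trans (le_max_right _ _) hn
  have hNpos : (0:ℝ) < (2^n : ℝ) := by positivity
  -- per-term bound
  have hterm : ∀ j ∈ Jn n, |cstN p τ n m j - gf p τ m| ≤
      (if m + j ∉ Jn n ∨ |j| < (T:ℤ) then 1 else β) := by
    intro j hj
    split_ifs with hcase
    · -- coarse bound by 1
      rw [cstN]
      split_ifs with hmem
      · have h1 := cst_le_one hp hτ m j
        have h2 := gf_le_one hp hτ m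
        have h3 := cst_nonneg (p := p) (τ := τ) m j
        have h4 := (Real.exp_pos (-(τ * |(m:ℝ)| ^ p) / 2)).le
        have h5 : 0 ≤ gf p τ m := (Real.exp_pos _).le
        rw [abs_sub_le_iff]
        constructor <;> linarith
      · have h5 : 0 ≤ gf p τ m := (Real.exp_pos _).le
        rw [zero_sub, abs_neg, _root_.abs_of_nonneg h5]
        exact gf_le_one hp hτ m
    · -- fine bound
      push_neg at hcase
      obtain ⟨hmem, hjT⟩ := hcase
      rw [cstN, if_pos hmem, cst_eq_gf_mul]
      set x : ℝ := τ * (|((m + j : ℤ) : ℝ)| ^ p - |(j : ℝ)| ^ p) / 2 with hx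
      have hgf1 := gf_le_one hp hτ m
      have hgf0 : 0 ≤ gf p τ m := (Real.exp_pos _).le
      have habsx : |x| ≤ u := by
        rw [hx, hu]
        rw [abs_div, abs_mul]
        have hd : |(2:ℝ)| = 2 := by norm_num
        rw [hd, _root_.abs_of_nonneg hτ.le]
        -- | |m+j|^p − |j|^p | ≤ |m| * (T/2)^(p−1)
        have hcore : _root_.abs (|((m + j : ℤ) : ℝ)| ^ p - |(j : ℝ)| ^ p) ≤ ((T:ℝ)/2) ^ (p-1) * |(m:ℝ)| := by
          set a : ℝ := |(j : ℝ)| with ha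
          set b : ℝ := |((m + j : ℤ) : ℝ)| with hb
          have hja : (T:ℝ) ≤ a := by
            rw [ha]
            have : (T:ℤ) ≤ |j| := by omega
            calc (T:ℝ) ≤ ((|j| : ℤ) : ℝ) := by exact_mod_cast this
            _ = |(j:ℝ)| := by push_cast; simp
          have hdiff : |b - a| ≤ |(m:ℝ)| := by
            rw [ha, hb]
            calc _root_.abs (|((m + j : ℤ) : ℝ)| - |(j:ℝ)|) ≤ |((m + j : ℤ) : ℝ) - (j:ℝ)| :=
              abs_abs_sub_abs_le_abs_sub _ _
            _ = |(m:ℝ)| := by push_cast; ring_nf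
          have hb2 : (T:ℝ)/2 ≤ b := by
            have : a - |(m:ℝ)| ≤ b := by
              have := abs_le.mp hdiff
              linarith [this.1]
            linarith [hja, hTm]
          have ha2 : (T:ℝ)/2 ≤ a := by linarith
          rcases le_total a b with hab | hab
          · rw [_root_.abs_of_nonneg (by
              have := Real.rpow_le_rpow (by positivity : (0:ℝ) ≤ a) hab hp.1.le
              linarith)]
            have h5 := rpow_sub_rpow_le hp.2.le (lt_of_lt_of_le hTpos ha2) hab
            have h6 : a ^ (p-1) ≤ ((T:ℝ)/2) ^ (p-1) :=
              Real.rpow_le_rpow_of_nonpos hTpos ha2 (by linarith [hp.2])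
            have h7 : b - a ≤ |(m:ℝ)| := by
              have := abs_le.mp hdiff
              linarith [this.2]
            calc b ^ p - a ^ p ≤ a ^ (p-1) * (b - a) := h5
            _ ≤ ((T:ℝ)/2) ^ (p-1) * |(m:ℝ)| := by
                apply mul_le_mul h6 h7 (by linarith [abs_le.mp hdiff]) (by positivity)
          · rw [_root_.abs_of_nonpos (by
              have := Real.rpow_le_rpow (by positivity : (0:ℝ) ≤ b) hab hp.1.le
              linarith)]
            have h5 := rpow_sub_rpow_le hp.2.le (lt_of_lt_of_le hTpos hb2) hab
            have h6 : b ^ (p-1) ≤ ((T:ℝ)/2) ^ (p-1) :=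
              Real.rpow_le_rpow_of_nonpos hTpos hb2 (by linarith [hp.2])
            have h7 : a - b ≤ |(m:ℝ)| := by
              have := abs_le.mp (abs_sub_comm b a ▸ hdiff)
              linarith [this.2]
            calc -(b ^ p - a ^ p) = a ^ p - b ^ p := by ring
            _ ≤ b ^ (p-1) * (a - b) := h5
            _ ≤ ((T:ℝ)/2) ^ (p-1) * |(m:ℝ)| := by
                apply mul_le_mul h6 h7 (by linarith) (by positivity)
        calc τ * _root_.abs (|((m + j : ℤ) : ℝ)| ^ p - |(j : ℝ)| ^ p) / 2
            ≤ τ * (((T:ℝ)/2) ^ (p-1) * |(m:ℝ)|) / 2 := by gcongr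
        _ = τ / 2 * |(m:ℝ)| * ((T:ℝ)/2) ^ (p-1) := by ring
      -- conclude
      have h8 : |gf p τ m * Real.exp x - gf p τ m| = gf p τ m * |Real.exp x - 1| := by
        rw [show gf p τ m * Real.exp x - gf p τ m = gf p τ m * (Real.exp x - 1) by ring,
          abs_mul, _root_.abs_of_nonneg hgf0]
      rw [h8]
      have h9 : |Real.exp x - 1| ≤ Real.exp |x| - 1 := abs_exp_sub_one_le' x
      have h10 : Real.exp |x| - 1 ≤ Real.exp u - 1 := by
        have := Real.exp_le_exp.mpr habsx
        linarith
      have h11 : Real.exp u - 1 ≤ u * Real.exp u := exp_sub_one_le_mul hu0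
      have h12 : u * Real.exp u ≤ u * Real.exp 1 := by
        apply mul_le_mul_of_nonneg_left (Real.exp_le_exp.mpr hu1) hu0
      have h13 : gf p τ m * |Real.exp x - 1| ≤ |Real.exp x - 1| := by
        nlinarith [abs_nonneg (Real.exp x - 1)]
      rw [hβ]
      linarith [h9, h10, h11, h12, h13]
  -- cardinality of the "bad" set
  have hpow := pow_pred n hn671
  have hcard1 : ((Finset.filter (fun j => m + j ∉ Jn n ∨ |j| < (T:ℤ)) (Jn n)).card : ℝ)
      ≤ 2 * |(m:ℝ)| + 1 + 2 * T := by
    have hsub : Finset.filter (fun j => m + j ∉ Jn n ∨ |j| < (T:ℤ)) (Jn n) ⊆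
        insert (-m) ((Finset.Icc (2^(n-1) - |m| + 1) (2^(n-1)) ∪
          Finset.Icc (-(2^(n-1)) : ℤ) (-(2^(n-1)) + |m| - 1)) ∪
          Finset.Icc (-(T:ℤ) + 1) ((T:ℤ) - 1)) := by
      intro j hjf
      rw [Finset.mem_filter] at hjf
      obtain ⟨hjJ, hcase⟩ := hjf
      rw [mem_Jn] at hjJ
      simp only [Finset.mem_insert, Finset.mem_union, Finset.mem_Icc]
      rcases hcase with hnot | hlt
      · rw [mem_Jn] at hnot
        push_neg at hnot
        rcases abs_cases m with ⟨h1, h2⟩ | ⟨h1, h2⟩ <;> rw [h1] <;> omega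
      · rcases abs_cases j with ⟨h1, h2⟩ | ⟨h1, h2⟩ <;> omega
    have hle := Finset.card_le_card hsub
    have hc1 : (Finset.Icc (2^(n-1) - |m| + 1) (2^(n-1) : ℤ)).card = m.natAbs := by
      rw [Int.card_Icc, Int.abs_eq_natAbs]
      omega
    have hc2 : (Finset.Icc (-(2^(n-1)) : ℤ) (-(2^(n-1)) + |m| - 1)).card = m.natAbs := by
      rw [Int.card_Icc, Int.abs_eq_natAbs]
      omega
    have hc3 : (Finset.Icc (-(T:ℤ) + 1) ((T:ℤ) - 1)).card ≤ 2 * T := by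
      rw [Int.card_Icc]
      omega
    have htot : (Finset.filter (fun j => m + j ∉ Jn n ∨ |j| < (T:ℤ)) (Jn n)).card
        ≤ 2 * m.natAbs + 1 + 2 * T := by
      calc (Finset.filter (fun j => m + j ∉ Jn n ∨ |j| < (T:ℤ)) (Jn n)).card
          ≤ _ := hle
        _ ≤ _ + 1 := Finset.card_insert_le _ _
        _ ≤ ((Finset.Icc (2^(n-1) - |m| + 1) (2^(n-1) : ℤ)).card +
              (Finset.Icc (-(2^(n-1)) : ℤ) (-(2^(n-1)) + |m| - 1)).card +
              (Finset.Icc (-(T:ℤ) + 1) ((T:ℤ) - 1)).card) + 1 := by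
            have := Finset.card_union_le
              (Finset.Icc (2^(n-1) - |m| + 1) (2^(n-1) : ℤ) ∪
                Finset.Icc (-(2^(n-1)) : ℤ) (-(2^(n-1)) + |m| - 1))
              (Finset.Icc (-(T:ℤ) + 1) ((T:ℤ) - 1))
            have h2 := Finset.card_union_le
              (Finset.Icc (2^(n-1) - |m| + 1) (2^(n-1) : ℤ))
              (Finset.Icc (-(2^(n-1)) : ℤ) (-(2^(n-1)) + |m| - 1))
            omega
        _ ≤ 2 * m.natAbs + 1 + 2 * T := by omega
    calc ((Finset.filter (fun j => m + j ∉ Jn n ∨ |j| < (T:ℤ)) (Jn n)).card : ℝ)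
        ≤ ((2 * m.natAbs + 1 + 2 * T : ℕ) : ℝ) := by exact_mod_cast htot
      _ = 2 * |(m:ℝ)| + 1 + 2 * T := by
          push_cast [Nat.cast_natAbs]
          ring
  -- sum bound
  have hsum : ∑ j ∈ Jn n, |cstN p τ n m j - gf p τ m|
      ≤ (2 * |(m:ℝ)| + 1 + 2 * T) + (2^n : ℝ) * β := by
    calc ∑ j ∈ Jn n, |cstN p τ n m j - gf p τ m|
        ≤ ∑ j ∈ Jn n, (if m + j ∉ Jn n ∨ |j| < (T:ℤ) then (1:ℝ) else β) :=
          Finset.sum_le_sum hterm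
      _ = ((Finset.filter (fun j => m + j ∉ Jn n ∨ |j| < (T:ℤ)) (Jn n)).card : ℝ) * 1 +
          ((Finset.filter (fun j => ¬(m + j ∉ Jn n ∨ |j| < (T:ℤ))) (Jn n)).card : ℝ) * β := by
          rw [Finset.sum_ite, Finset.sum_const, Finset.sum_const]
          simp [nsmul_eq_mul]
      _ ≤ (2 * |(m:ℝ)| + 1 + 2 * T) + (2^n : ℝ) * β := by
          have hf2 : ((Finset.filter (fun j => ¬(m + j ∉ Jn n ∨ |j| < (T:ℤ))) (Jn n)).card : ℝ)
              ≤ (2^n : ℝ) := by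
            have := Finset.card_filter_le (Jn n) (fun j => ¬(m + j ∉ Jn n ∨ |j| < (T:ℤ)))
            rw [card_Jn hn671] at this
            exact_mod_cast this
          have hb1 := hcard1
          nlinarith [hβ0, hf2, hb1]
  -- conclude
  have hb0 : (0:ℝ) ≤ (1 / (2^n : ℝ)) * ∑ j ∈ Jn n, |cstN p τ n m j - gf p τ m| := by
    apply mul_nonneg (by positivity)
    exact Finset.sum_nonneg (fun j _ => abs_nonneg _)
  rw [Real.dist_eq, sub_zero, _root_.abs_of_nonneg hb0]
  calc (1 / (2^n : ℝ)) * ∑ j ∈ Jn n, |cstN p τ n m j - gf p τ m|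
      ≤ (1 / (2^n : ℝ)) * ((2 * |(m:ℝ)| + 1 + 2 * T) + (2^n : ℝ) * β) :=
        mul_le_mul_of_nonneg_left hsum (by positivity)
    _ = (2 * |(m:ℝ)| + 1 + 2 * T) / (2^n : ℝ) + β := by
        field_simp
    _ < ε/2 + ε/2 := add_lt_add (hn₁ n hnn₁) hβε
    _ = ε := by ring


lemma abs_psi (m : ℤ) (θ : ℝ) : ‖psi p τ m θ‖ = gf p τ m := by
  rw [psi, norm_mul]
  have h1 : ‖((Real.exp (-(τ * |(m : ℝ)| ^ p) / 2) : ℝ) : ℂ)‖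
      = gf p τ m := by
    rw [Complex.norm_real, Real.norm_eq_abs, gf, _root_.abs_of_nonneg (Real.exp_pos _).le]
  have h2 : Complex.I * (m : ℂ) * (θ : ℂ) = (((m : ℝ) * θ : ℝ) : ℂ) * Complex.I := by
    push_cast; ring
  rw [h1, h2, Complex.norm_exp_ofReal_mul_I, mul_one]

lemma Atilde_eq_zero {n : ℕ} (hn : 1 ≤ n) {m : ℤ} (hm : (2^n : ℤ) < |m|) (k l : ℕ) :
    Atilde p τ n m k l = 0 := by
  rw [Atilde]
  rw [Finset.sum_congr rfl (fun j hj => by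
    rw [cstN_eq_zero_of_large hn hm j hj, Complex.ofReal_zero, mul_zero])]
  simp


end Aux

/-- Let `p ∈ (0,1)`, `τ > 0`, and let `(f̃_m)` be square-summable complex
coefficients. Then the series `f(θ) = Σ_m f̃_m ψ_m(θ)` converges absolutely, and the matrix
elements `(Ã_n)_{kl} = Σ_m f̃_m (Ã_{m,n})_{kl}` converge, uniformly in `k, l ∈ {0,…,N−1}`,
to those of the diagonal matrix with entries `f(θ_l)`. -/
theorem matrix_elements_uniform_convergence (p τ : ℝ) (hp : p ∈ Set.Ioo (0 : ℝ) 1)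
    (hτ : 0 < τ) (ft : ℤ → ℂ) (hft : Summable fun m : ℤ => ((norm : ℂ → ℝ) (ft m)) ^ 2) :
    (∀ θ : ℝ, Summable fun m : ℤ => (norm : ℂ → ℝ) (ft m * psi p τ m θ)) ∧
    ∀ ε : ℝ, 0 < ε → ∃ n₀ : ℕ, ∀ n : ℕ, n₀ ≤ n → ∀ k l : ℕ, k < 2 ^ n → l < 2 ^ n →
      (norm : ℂ → ℝ) ((∑' m : ℤ, ft m * Atilde p τ n m k l)
          - (∑' m : ℤ, ft m * psi p τ m (2 * Real.pi * l / 2 ^ n))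
              * (if k = l then 1 else 0)) < ε := by
  have hκ := kappa_pos hp
  -- square-summability of the pieces
  have hgf2 : Summable (fun m : ℤ => gf p τ m ^ 2) := by
    refine (summable_exp_neg_abs_rpow hp.1 hτ).congr (fun m => ?_)
    rw [gf, ← Real.exp_nat_mul]
    congr 1
    push_cast
    ring
  have hqq2 : Summable (fun m : ℤ => qq p τ m ^ 2) := by
    refine (summable_exp_neg_abs_rpow hp.1
      (by positivity : (0:ℝ) < 2 * (τ * (1 - (2:ℝ) ^ (p-1)) / 2))).congr (fun m => ?_)
    rw [qq, ← Real.exp_nat_mul]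
    congr 1
    push_cast
    ring
  have hmax2 : Summable (fun m : ℤ => (CC p τ / max |(m:ℝ)| 1) ^ 2) := by
    have h1 : Summable (fun m : ℤ => 1 / (m:ℝ) ^ 2) := summable_one_div_int_pow.mpr one_lt_two
    have h2 : Summable (fun m : ℤ => if m = 0 then (1:ℝ) else 0) := by
      apply summable_of_ne_finset_zero (s := ({0} : Finset ℤ))
      intro m hm
      simp only [Finset.mem_singleton] at hm
      simp [hm]
    have h3 : Summable (fun m : ℤ => 1 / (max |(m:ℝ)| 1) ^ 2) := by
      refine Summable.of_nonneg_of_le (fun m => by positivity) (fun m => ?_) (h1.add h2)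
      by_cases hm : m = 0
      · subst hm
        simp
      · have hm1 : (1:ℝ) ≤ |(m:ℝ)| := by
          have : (1:ℤ) ≤ |m| := Int.one_le_abs (by exact_mod_cast hm)
          calc (1:ℝ) ≤ ((|m| : ℤ) : ℝ) := by exact_mod_cast this
          _ = |(m:ℝ)| := by push_cast; simp
        rw [max_eq_left hm1, if_neg hm, add_zero, _root_.sq_abs]
    refine (h3.mul_left (CC p τ ^ 2)).of_nonneg_of_le (fun m => by positivity) (fun m => ?_)
    rw [div_pow, div_eq_mul_one_div]
  have hmaj2 : Summable (fun m : ℤ => hmaj p τ m ^ 2) := by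
    refine Summable.of_nonneg_of_le (fun m => sq_nonneg _) (fun m => ?_)
      (((hgf2.add hqq2).add hmax2).mul_left 3)
    rw [hmaj]
    have h1 : 0 ≤ gf p τ m := (Real.exp_pos _).le
    have h2 : 0 ≤ qq p τ m := (Real.exp_pos _).le
    have h3 : 0 ≤ CC p τ / max |(m:ℝ)| 1 := by
      apply div_nonneg (tsum_nonneg (fun s => (Real.exp_pos _).le))
      exact le_trans zero_le_one (le_max_right _ _)
    nlinarith [sq_nonneg (gf p τ m - qq p τ m), sq_nonneg (gf p τ m - CC p τ / max |(m:ℝ)| 1),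
      sq_nonneg (qq p τ m - CC p τ / max |(m:ℝ)| 1)]
  have hfthmaj : Summable (fun m : ℤ => ‖ft m‖ * hmaj p τ m) := by
    refine Summable.of_nonneg_of_le (fun m => ?_) (fun m => ?_) (hft.add hmaj2)
    · apply mul_nonneg (norm_nonneg _)
      have h1 : 0 ≤ gf p τ m := (Real.exp_pos _).le
      have h2 : 0 ≤ qq p τ m := (Real.exp_pos _).le
      have h3 : 0 ≤ CC p τ / max |(m:ℝ)| 1 := by
        apply div_nonneg (tsum_nonneg (fun s => (Real.exp_pos _).le))
        exact le_trans zero_le_one (le_max_right _ _)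
      rw [hmaj]; linarith
    · nlinarith [sq_nonneg (‖ft m‖ - hmaj p τ m)]
  have hftgf : Summable (fun m : ℤ => ‖ft m‖ * gf p τ m) := by
    refine Summable.of_nonneg_of_le (fun m => ?_) (fun m => ?_) (hft.add hgf2)
    · exact mul_nonneg (norm_nonneg _) (Real.exp_pos _).le
    · nlinarith [sq_nonneg (‖ft m‖ - gf p τ m)]
  have part1 : ∀ θ : ℝ, Summable fun m : ℤ => ‖ft m * psi p τ m θ‖ := by
    intro θ
    refine hftgf.congr (fun m => ?_)
    rw [norm_mul, abs_psi]
  refine ⟨part1, ?_⟩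
  -- uniform convergence
  have hS : Tendsto (fun n : ℕ => ∑' m : ℤ, ‖ft m‖ *
      ((1/(2^n : ℝ)) * ∑ j ∈ Jn n, |cstN p τ n m j - gf p τ m|)) atTop (𝓝 0) := by
    have h0 : (0:ℝ) = ∑' _ : ℤ, (0:ℝ) := by simp
    rw [h0]
    apply tendsto_tsum_of_dominated_convergence (bound := fun m => ‖ft m‖ * hmaj p τ m)
      hfthmaj
    · intro m
      simpa using (bnd_tendsto hp hτ m).const_mul (‖ft m‖)
    · filter_upwards [eventually_ge_atTop 1] with n hn
      intro m
      rw [Real.norm_eq_abs, _root_.abs_of_nonneg (by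
        apply mul_nonneg (norm_nonneg _)
        apply mul_nonneg (by positivity)
        exact Finset.sum_nonneg (fun j _ => abs_nonneg _))]
      exact mul_le_mul_of_nonneg_left (bnd_le_hmaj hp hτ hn m) (norm_nonneg _)
  intro ε hε
  have hev := (hS.eventually_lt_const hε)
  rw [eventually_atTop] at hev
  obtain ⟨n₂, hn₂⟩ := hev
  refine ⟨max n₂ 1, fun n hn k l hk hl => ?_⟩
  have hn1 : 1 ≤ n := le_trans (le_max_right _ _) hn
  have hn2 : n₂ ≤ n := le_trans (le_max_left _ _) hn
  -- summability at this n
  have hsup : ∀ m : ℤ, m ∉ Finset.Icc (-(2^n) : ℤ) (2^n) → ft m * Atilde p τ n m k l = 0 := by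
    intro m hm
    rw [Finset.mem_Icc] at hm
    push_neg at hm
    have habs : (2^n : ℤ) < |m| := by
      rcases abs_cases m with ⟨h1, h2⟩ | ⟨h1, h2⟩ <;> omega
    rw [Atilde_eq_zero hn1 habs, mul_zero]
  have hsA : Summable (fun m : ℤ => ft m * Atilde p τ n m k l) :=
    summable_of_ne_finset_zero hsup
  have hsP : Summable (fun m : ℤ => ft m * psi p τ m (2 * Real.pi * l / 2 ^ n)) := by
    apply Summable.of_norm
    refine (part1 (2 * Real.pi * l / 2 ^ n)).congr (fun m => ?_)
    rfl
  have hdiff_le : ∀ m : ℤ, ‖ft m * Atilde p τ n m k l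
      - ft m * psi p τ m (2 * Real.pi * l / 2 ^ n) * (if k = l then 1 else 0)‖
      ≤ ‖ft m‖ * ((1/(2^n : ℝ)) * ∑ j ∈ Jn n, |cstN p τ n m j - gf p τ m|) := by
    intro m
    have h1 : ft m * Atilde p τ n m k l
        - ft m * psi p τ m (2 * Real.pi * l / 2 ^ n) * (if k = l then 1 else 0)
        = ft m * (Atilde p τ n m k l
          - psi p τ m (2 * Real.pi * l / 2 ^ n) * (if k = l then 1 else 0)) := by ring
    rw [h1, norm_mul]
    exact mul_le_mul_of_nonneg_left (diff_abs_le hn1 hk hl m) (norm_nonneg _)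
  have hs1 : Summable (fun m : ℤ => ‖ft m * Atilde p τ n m k l
      - ft m * psi p τ m (2 * Real.pi * l / 2 ^ n) * (if k = l then 1 else 0)‖) := by
    refine Summable.of_nonneg_of_le (fun m => norm_nonneg _) (fun m => ?_) hfthmaj
    exact le_trans (hdiff_le m)
      (mul_le_mul_of_nonneg_left (bnd_le_hmaj hp hτ hn1 m) (norm_nonneg _))
  have hs2 : Summable (fun m : ℤ => ‖ft m‖ *
      ((1/(2^n : ℝ)) * ∑ j ∈ Jn n, |cstN p τ n m j - gf p τ m|)) := by
    refine Summable.of_nonneg_of_le (fun m => ?_) (fun m => ?_) hfthmaj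
    · apply mul_nonneg (norm_nonneg _)
      apply mul_nonneg (by positivity)
      exact Finset.sum_nonneg (fun j _ => abs_nonneg _)
    · exact mul_le_mul_of_nonneg_left (bnd_le_hmaj hp hτ hn1 m) (norm_nonneg _)
  calc ‖(∑' m : ℤ, ft m * Atilde p τ n m k l)
          - (∑' m : ℤ, ft m * psi p τ m (2 * Real.pi * l / 2 ^ n))
              * (if k = l then 1 else 0)‖
      = ‖∑' m : ℤ, (ft m * Atilde p τ n m k l
          - ft m * psi p τ m (2 * Real.pi * l / 2 ^ n) * (if k = l then 1 else 0))‖ := by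
        rw [← tsum_mul_right, ← Summable.tsum_sub hsA (hsP.mul_right _)]
    _ ≤ ∑' m : ℤ, ‖ft m * Atilde p τ n m k l
          - ft m * psi p τ m (2 * Real.pi * l / 2 ^ n) * (if k = l then 1 else 0)‖ := by
        exact norm_tsum_le_tsum_norm hs1
    _ ≤ ∑' m : ℤ, ‖ft m‖ *
          ((1/(2^n : ℝ)) * ∑ j ∈ Jn n, |cstN p τ n m j - gf p τ m|) := by
        refine Summable.tsum_le_tsum (fun m => ?_) hs1 hs2
        exact hdiff_le m
    _ < ε := hn₂ n hn2


end QECD
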